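/- Let n be an odd positive integer with prime factorization n = p₁^{n₁} ⋯ p_m^{n_m} (the p_i distinct primes), let A be a finite abelian group, and let G be a finite group with a normal subgroup isomorphic to A whose quotient is cyclic of order n. If for every automorphism φ of G the twisted conjugacy class [e]_φ = {g⁻¹·φ(g) : g ∈ G} is a subgroup of G, then G is nilpotent of nilpotency class at most max{n₁, …, n_m} + 1. -/

import Mathlib

namespace TC



variable {M : Type*} [CommGroup M]

/-- `δ(x) = x⁻¹ * σ x` as a monoid endomorphism. -/
def dlt (σ : MulAut M) : Monoid.End M where
  toFun x := x⁻¹ * σ x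
  map_one' := by simp
  map_mul' x y := by
    simp only [map_mul, mul_inv]
    simp [mul_assoc, mul_comm, mul_left_comm]

/-- `ε_k(x) = σ^k x * x⁻¹` as a monoid endomorphism. -/
def eps (σ : MulAut M) (k : ℕ) : Monoid.End M where
  toFun x := (σ ^ k) x * x⁻¹
  map_one' := by simp
  map_mul' x y := by
    simp only [map_mul, mul_inv]
    simp [mul_assoc, mul_comm, mul_left_comm]

@[simp] lemma dlt_apply (σ : MulAut M) (x : M) : dlt σ x = x⁻¹ * σ x := rfl
@[simp] lemma eps_apply (σ : MulAut M) (k : ℕ) (x : M) : eps σ k x = (σ ^ k) x * x⁻¹ := rfl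

lemma end_mul_apply (f g : Monoid.End M) (x : M) : (f * g) x = f (g x) := rfl

lemma end_pow_succ (f : Monoid.End M) (n : ℕ) (x : M) : (f ^ (n + 1)) x = f ((f ^ n) x) := by
  rw [pow_succ']; rfl

lemma end_pow_succ' (f : Monoid.End M) (n : ℕ) (x : M) : (f ^ (n + 1)) x = (f ^ n) (f x) := by
  rw [pow_succ]; rfl

lemma mulaut_pow_apply (σ : MulAut M) (n : ℕ) (x : M) : (σ ^ (n + 1)) x = σ ((σ ^ n) x) := by
  rw [pow_succ']; rfl

/-- The twisted-orbit set of `a`. -/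
def Sset (σ : MulAut M) (k : ℕ) (a : M) : Set M :=
  {y | ∃ (i : ℤ) (b : M), y = (σ ^ i) ((σ ^ k) b * b⁻¹) * ((σ ^ i) a * a⁻¹)}

/-- The condition that all the relevant twisted classes are subgroups. -/
def Cond (σ : MulAut M) : Prop :=
  ∀ (k : ℕ) (a : M), ∃ S : Subgroup M, (S : Set M) = Sset σ k a



/-- Minimal positive period of `x` under `σ`. -/
noncomputable def per (σ : MulAut M) (x : M) : ℕ :=
  sInf {d : ℕ | 0 < d ∧ (σ ^ d) x = x}

section Period

variable (σ : MulAut M) (x : M)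

lemma per_mem (hex : ∃ d : ℕ, 0 < d ∧ (σ ^ d) x = x) :
    0 < per σ x ∧ (σ ^ per σ x) x = x := Nat.sInf_mem hex

lemma per_pos (hex : ∃ d : ℕ, 0 < d ∧ (σ ^ d) x = x) : 0 < per σ x := (per_mem σ x hex).1

lemma per_fix (hex : ∃ d : ℕ, 0 < d ∧ (σ ^ d) x = x) : (σ ^ per σ x) x = x :=
  (per_mem σ x hex).2

lemma fix_mul (hex : ∃ d : ℕ, 0 < d ∧ (σ ^ d) x = x) (s : ℕ) :
    (σ ^ (per σ x * s)) x = x := by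
  induction s with
  | zero => simp
  | succ s ih =>
    have h : per σ x * (s + 1) = per σ x + per σ x * s := by ring
    rw [h, pow_add]
    show (σ ^ per σ x) ((σ ^ (per σ x * s)) x) = x
    rw [ih, per_fix σ x hex]

lemma fix_of_dvd (hex : ∃ d : ℕ, 0 < d ∧ (σ ^ d) x = x) {d : ℕ} (hd : per σ x ∣ d) :
    (σ ^ d) x = x := by
  obtain ⟨s, rfl⟩ := hd
  exact fix_mul σ x hex s

lemma zpow_add_apply (a b : ℤ) : (σ ^ (a + b)) x = (σ ^ a) ((σ ^ b) x) := by
  rw [zpow_add]; rfl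

lemma per_dvd (hex : ∃ d : ℕ, 0 < d ∧ (σ ^ d) x = x) {d : ℕ} (hfix : (σ ^ d) x = x) :
    per σ x ∣ d := by
  have hd : d = d % per σ x + per σ x * (d / per σ x) := by
    rw [add_comm, Nat.div_add_mod]
  have h2 : (σ ^ (d % per σ x)) x = x := by
    have h3 := hfix
    rw [hd, pow_add] at h3
    rw [show (σ ^ (d % per σ x) * σ ^ (per σ x * (d / per σ x))) x
        = (σ ^ (d % per σ x)) ((σ ^ (per σ x * (d / per σ x))) x) from rfl,
      fix_mul σ x hex] at h3
    exact h3
  by_cases hz : d % per σ x = 0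
  · exact Nat.dvd_of_mod_eq_zero hz
  · exfalso
    have hlt : d % per σ x < per σ x := Nat.mod_lt _ (per_pos σ x hex)
    have : d % per σ x ∈ {d : ℕ | 0 < d ∧ (σ ^ d) x = x} := ⟨Nat.pos_of_ne_zero hz, h2⟩
    have hle : per σ x ≤ d % per σ x := Nat.sInf_le this
    omega

lemma zpow_per_fix (hex : ∃ d : ℕ, 0 < d ∧ (σ ^ d) x = x) (i : ℤ) :
    (σ ^ (i + (per σ x : ℤ))) x = (σ ^ i) x := by
  rw [zpow_add]
  show (σ ^ i) ((σ ^ (per σ x : ℤ)) x) = _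
  rw [show ((σ ^ (per σ x : ℤ)) x) = (σ ^ per σ x) x by rw [zpow_natCast], per_fix σ x hex]

lemma zpow_per_fix_mul (hex : ∃ d : ℕ, 0 < d ∧ (σ ^ d) x = x) (k : ℤ) (i : ℤ) :
    (σ ^ (i + (per σ x : ℤ) * k)) x = (σ ^ i) x := by
  induction k using Int.induction_on with
  | zero => simp
  | succ k ih =>
    have h : i + (per σ x : ℤ) * (k + 1) = (i + (per σ x : ℤ) * k) + (per σ x : ℤ) := by ring
    rw [h, zpow_per_fix σ x hex, ih]
  | pred k ih =>
    have h : i + (per σ x : ℤ) * (-k) = (i + (per σ x : ℤ) * (-k - 1)) + (per σ x : ℤ) := by ring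
    rw [← ih, h, zpow_per_fix σ x hex]

lemma zpow_reduce (hex : ∃ d : ℕ, 0 < d ∧ (σ ^ d) x = x) (i : ℤ) :
    ∃ j : ℕ, j < per σ x ∧ (σ ^ i) x = (σ ^ (j : ℤ)) x := by
  have hp : (0 : ℤ) < (per σ x : ℤ) := by exact_mod_cast per_pos σ x hex
  refine ⟨(i % (per σ x : ℤ)).toNat, ?_, ?_⟩
  · have h1 : i % (per σ x : ℤ) < (per σ x : ℤ) := Int.emod_lt_of_pos i hp
    omega
  · have h0 : 0 ≤ i % (per σ x : ℤ) := Int.emod_nonneg i (by omega)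
    have : ((i % (per σ x : ℤ)).toNat : ℤ) = i % (per σ x : ℤ) := Int.toNat_of_nonneg h0
    rw [this]
    have hd : i = i % (per σ x : ℤ) + (per σ x : ℤ) * (i / (per σ x : ℤ)) := by
      rw [add_comm, Int.mul_ediv_add_emod]
    calc (σ ^ i) x = (σ ^ (i % (per σ x : ℤ) + (per σ x : ℤ) * (i / (per σ x : ℤ)))) x := by
          rw [← hd]
      _ = (σ ^ (i % (per σ x : ℤ))) x := zpow_per_fix_mul σ x hex _ _

lemma zpow_inj (hex : ∃ d : ℕ, 0 < d ∧ (σ ^ d) x = x) {i j : ℕ} (hi : i < per σ x)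
    (hj : j < per σ x) (hij : (σ ^ (i : ℤ)) x = (σ ^ (j : ℤ)) x) : i = j := by
  rcases Nat.lt_or_ge i j with hlt | hge
  · exfalso
    have h : (σ ^ (j - i)) x = x := by
      have := congrArg (fun y => (σ ^ (-(i : ℤ))) y) hij
      rw [← zpow_add_apply σ x (-(i:ℤ)) (i:ℤ), ← zpow_add_apply σ x (-(i:ℤ)) (j:ℤ)] at this
      simp at this
      have hcast : ((j : ℤ) - (i : ℤ)) = ((j - i : ℕ) : ℤ) := by omega
      rw [show (-(i:ℤ) + (j:ℤ)) = ((j:ℤ) - (i:ℤ)) by ring, hcast, zpow_natCast] at this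
      exact this.symm
    have hdvd := per_dvd σ x hex h
    have : j - i ≠ 0 := by omega
    have := Nat.le_of_dvd (by omega) hdvd
    omega
  · rcases Nat.eq_or_lt_of_le hge with heq | hlt
    · omega
    · exfalso
      have h : (σ ^ (i - j)) x = x := by
      -- symmetric
        have := congrArg (fun y => (σ ^ (-(j : ℤ))) y) hij.symm
        rw [← zpow_add_apply σ x (-(j:ℤ)) (j:ℤ), ← zpow_add_apply σ x (-(j:ℤ)) (i:ℤ)] at this
        simp at this
        have hcast : ((i : ℤ) - (j : ℤ)) = ((i - j : ℕ) : ℤ) := by omega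
        rw [show (-(j:ℤ) + (i:ℤ)) = ((i:ℤ) - (j:ℤ)) by ring, hcast, zpow_natCast] at this
        exact this.symm
      have hdvd := per_dvd σ x hex h
      have : i - j ≠ 0 := by omega
      have := Nat.le_of_dvd (by omega) hdvd
      omega

/-- The cardinality of the difference-orbit set equals the minimal period. -/
lemma card_orbit_diff (hex : ∃ d : ℕ, 0 < d ∧ (σ ^ d) x = x) :
    Nat.card {y : M // y ∈ {y : M | ∃ i : ℤ, y = (σ ^ i) x * x⁻¹}} = per σ x := by
  have hper := per_pos σ x hex
  have hb : Function.Bijective (fun j : Fin (per σ x) =>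
      (⟨(σ ^ (j : ℤ)) x * x⁻¹, ⟨(j : ℤ), rfl⟩⟩ :
        {y : M // y ∈ {y : M | ∃ i : ℤ, y = (σ ^ i) x * x⁻¹}})) := by
    constructor
    · intro j₁ j₂ hj
      have h : (σ ^ ((j₁ : ℕ) : ℤ)) x * x⁻¹ = (σ ^ ((j₂ : ℕ) : ℤ)) x * x⁻¹ :=
        congrArg Subtype.val hj
      have h2 := mul_right_cancel h
      exact Fin.ext (zpow_inj σ x hex j₁.isLt j₂.isLt h2)
    · rintro ⟨y, ⟨i, rfl⟩⟩
      obtain ⟨j, hj, hji⟩ := zpow_reduce σ x hex i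
      exact ⟨⟨j, hj⟩, by simp [hji]⟩
  have := Nat.card_eq_of_bijective _ hb
  simpa using this.symm

end Period



-- cocycle basics for  c i = (σ^i m) * m⁻¹
lemma cocycle_add (σ : MulAut M) (m : M) (i j : ℤ) :
    (σ ^ (i + j)) m * m⁻¹ = ((σ ^ i) m * m⁻¹) * (σ ^ i) ((σ ^ j) m * m⁻¹) := by
  rw [zpow_add_apply σ m i j, map_mul, map_inv]
  simp [mul_assoc, mul_comm, mul_left_comm]

lemma cocycle_symm (σ : MulAut M) (m : M) (i : ℤ) :
    σ ((σ ^ i) m * m⁻¹) * ((σ ^ i) m * m⁻¹)⁻¹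
      = (σ ^ i) (σ m * m⁻¹) * (σ m * m⁻¹)⁻¹ := by
  have h1 := cocycle_add σ m i 1
  have h2 := cocycle_add σ m 1 i
  rw [add_comm i 1] at h1
  -- h2 : c(1+i) = c 1 * σ (c i);  h1 : c(1+i) = c i * σ^i (c 1)
  have h3 : ((σ ^ (1:ℤ)) m * m⁻¹) * (σ ^ (1:ℤ)) ((σ ^ i) m * m⁻¹)
      = ((σ ^ i) m * m⁻¹) * (σ ^ i) ((σ ^ (1:ℤ)) m * m⁻¹) := by rw [← h2, ← h1]
  have hz : (σ ^ (1:ℤ)) = σ := zpow_one σ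
  rw [hz] at h3
  calc σ ((σ ^ i) m * m⁻¹) * ((σ ^ i) m * m⁻¹)⁻¹
      = ((σ m * m⁻¹)⁻¹ * ((σ m * m⁻¹) * σ ((σ ^ i) m * m⁻¹))) * ((σ ^ i) m * m⁻¹)⁻¹ := by
        group
    _ = ((σ m * m⁻¹)⁻¹ * (((σ ^ i) m * m⁻¹) * (σ ^ i) (σ m * m⁻¹))) * ((σ ^ i) m * m⁻¹)⁻¹ := by
        rw [h3]
    _ = (σ ^ i) (σ m * m⁻¹) * (σ m * m⁻¹)⁻¹ := by
        simp [mul_assoc, mul_comm, mul_left_comm]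


lemma mulaut_fix_pow {X : Type*} [Monoid X] (e : MulAut X) {x : X} (hx : e x = x) :
    ∀ k : ℕ, (e ^ k) x = x := by
  intro k
  induction k with
  | zero => rfl
  | succ k ih => rw [pow_succ']; show e ((e ^ k) x) = x; rw [ih, hx]

lemma mulaut_fix_inv {X : Type*} [Monoid X] (e : MulAut X) {x : X} (hx : e x = x) :
    e⁻¹ x = x := by
  have := congrArg (fun y => e⁻¹ y) hx
  simpa using this.symm

lemma mulaut_fix_zpow {X : Type*} [Monoid X] (e : MulAut X) {x : X} (hx : e x = x) :
    ∀ j : ℤ, (e ^ j) x = x := by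
  intro j
  cases j with
  | ofNat k => rw [Int.ofNat_eq_coe, zpow_natCast]; exact mulaut_fix_pow e hx k
  | negSucc k =>
    rw [zpow_negSucc]
    exact mulaut_fix_inv _ (mulaut_fix_pow e hx (k + 1))

theorem sublemma {M : Type*} [CommGroup M] [Finite M] (q R : ℕ) (hq : q.Prime)
    (σ : MulAut M) (hM : IsPGroup q M) (hσ : σ ^ (q ^ R) = 1) (hR : 1 ≤ R)
    (hc0 : ∀ m : M, ∃ S : Subgroup M, (S : Set M) = {y : M | ∃ i : ℤ, y = (σ ^ i) m * m⁻¹})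
    (m : M) : dlt σ (eps σ (q ^ (R - 1)) m) = 1 := by
  haveI : Fact q.Prime := ⟨hq⟩
  set u : ℕ := q ^ (R - 1) with hu
  have hfixall : ∀ x : M, (σ ^ (q ^ R)) x = x := fun x => by rw [hσ]; rfl
  have hexm : ∃ d : ℕ, 0 < d ∧ (σ ^ d) m = m :=
    ⟨q ^ R, pow_pos hq.pos _, hfixall m⟩
  set c1 : M := σ m * m⁻¹ with hc1
  have hexc1 : ∃ d : ℕ, 0 < d ∧ (σ ^ d) c1 = c1 :=
    ⟨q ^ R, pow_pos hq.pos _, hfixall c1⟩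
  -- the main claim
  have CLAIM : (σ ^ u) c1 = c1 := by
    obtain ⟨S, hS⟩ := hc0 m
    have hmem : ∀ i : ℤ, (σ ^ i) m * m⁻¹ ∈ S := fun i => by
      rw [← SetLike.mem_coe, hS]; exact ⟨i, rfl⟩
    have hmem' : ∀ y ∈ S, ∃ i : ℤ, y = (σ ^ i) m * m⁻¹ := fun y hy => by
      rwa [← SetLike.mem_coe, hS] at hy
    have hc1S : c1 ∈ S := by
      have := hmem 1
      rwa [zpow_one] at this
    have hσS : ∀ y ∈ S, σ y ∈ S := by
      intro y hy
      obtain ⟨i, rfl⟩ := hmem' y hy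
      have h := cocycle_add σ m 1 i
      rw [zpow_one] at h
      have : σ ((σ ^ i) m * m⁻¹) = (σ m * m⁻¹)⁻¹ * ((σ ^ (1 + i)) m * m⁻¹) := by
        rw [h]; group
      rw [this]
      exact mul_mem (inv_mem hc1S) (hmem (1 + i))
    have hσinvS : ∀ y ∈ S, σ⁻¹ y ∈ S := by
      intro y hy
      obtain ⟨i, rfl⟩ := hmem' y hy
      have key : σ⁻¹ ((σ ^ i) m * m⁻¹)
          = ((σ ^ (i - 1)) m * m⁻¹) * (((σ ^ (-1 : ℤ)) m) * m⁻¹)⁻¹ := by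
        have h1 : σ⁻¹ ((σ ^ i) m) = (σ ^ (i - 1)) m := by
          have : (σ ^ (i - 1)) m = (σ ^ ((-1) + i)) m := by ring_nf
          rw [this, zpow_add_apply σ m (-1) i, zpow_neg_one]
        have h2 : σ⁻¹ m = (σ ^ (-1 : ℤ)) m := by rw [zpow_neg_one]
        rw [map_mul, map_inv, h1, h2]
        simp [mul_assoc, mul_comm, mul_left_comm]
      rw [key]
      exact mul_mem (hmem _) (inv_mem (hmem _))
    -- the endomorphism ψ of S
    set ψ : ↥S →* ↥S :=
      { toFun := fun h => ⟨σ ↑h * (↑h)⁻¹, mul_mem (hσS _ h.2) (inv_mem h.2)⟩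
        map_one' := by ext; simp
        map_mul' := fun a b => by
          ext
          push_cast
          rw [map_mul]
          simp [mul_assoc, mul_comm, mul_left_comm] } with hψ
    have hψ_apply : ∀ h : ↥S, (ψ h : M) = σ ↑h * (↑h)⁻¹ := fun h => rfl
    -- cardinalities
    have hcardS : Nat.card ↥S = per σ m := by
      rw [← card_orbit_diff σ m hexm]
      exact Nat.card_congr (Equiv.setCongr hS)
    have hmapset : ((ψ.range.map S.subtype : Subgroup M) : Set M)
        = {y : M | ∃ i : ℤ, y = (σ ^ i) c1 * c1⁻¹} := by
      ext y
      constructor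
      · rintro ⟨z, ⟨w, rfl⟩, rfl⟩
        obtain ⟨i, hw⟩ := hmem' ↑w w.2
        refine ⟨i, ?_⟩
        have : (S.subtype (ψ w) : M) = σ ↑w * (↑w)⁻¹ := rfl
        rw [this, hw]
        exact cocycle_symm σ m i
      · rintro ⟨i, rfl⟩
        refine ⟨ψ ⟨(σ ^ i) m * m⁻¹, hmem i⟩, ⟨⟨(σ ^ i) m * m⁻¹, hmem i⟩, rfl⟩, ?_⟩
        have : (S.subtype (ψ ⟨(σ ^ i) m * m⁻¹, hmem i⟩) : M)
            = σ ((σ ^ i) m * m⁻¹) * ((σ ^ i) m * m⁻¹)⁻¹ := rfl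
        rw [this, cocycle_symm σ m i]
    have hcardrange : Nat.card ↥ψ.range = per σ c1 := by
      have e1 : Nat.card ↥ψ.range = Nat.card ↥(ψ.range.map S.subtype) :=
        Nat.card_congr (Subgroup.equivMapOfInjective _ _ (Subgroup.subtype_injective S)).toEquiv
      rw [e1, ← card_orbit_diff σ c1 hexc1]
      exact Nat.card_congr (Equiv.setCongr hmapset)
    have hlag : Nat.card ↥S = Nat.card ↥ψ.range * Nat.card ↥ψ.ker := by
      rw [Subgroup.card_eq_card_quotient_mul_card_subgroup ψ.ker]
      congr 1
      exact Nat.card_congr (QuotientGroup.quotientKerEquivRange ψ).toEquiv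
    by_cases hcase : Nat.card ↥S = 1
    · -- trivial case : c1 = 1
      have : S = ⊥ := Subgroup.eq_bot_of_card_eq S hcase
      have hc1bot : c1 ∈ (⊥ : Subgroup M) := this ▸ hc1S
      have : c1 = 1 := Subgroup.mem_bot.mp hc1bot
      rw [this, map_one]
    · -- q divides the fixed points
      have hSp : IsPGroup q ↥S := by
        intro h
        obtain ⟨k, hk⟩ := hM ↑h
        exact ⟨k, Subtype.ext (by rw [SubmonoidClass.coe_pow]; exact hk)⟩
      have hqS : q ∣ Nat.card ↥S := by
        rcases hSp.card_eq_or_dvd with h1 | h2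
        · exact absurd h1 hcase
        · exact h2
      -- σ restricted to S
      set σS : MulAut ↥S :=
        { toFun := fun h => ⟨σ ↑h, hσS _ h.2⟩
          invFun := fun h => ⟨σ⁻¹ ↑h, hσinvS _ h.2⟩
          left_inv := fun h => Subtype.ext (by simp)
          right_inv := fun h => Subtype.ext (by simp)
          map_mul' := fun a b => Subtype.ext (by push_cast; rw [map_mul]) } with hσSdef
      have hσS_apply : ∀ h : ↥S, (σS h : M) = σ ↑h := fun h => rfl
      have hσSpow : ∀ (k : ℕ) (h : ↥S), ((σS ^ k) h : M) = (σ ^ k) ↑h := by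
        intro k
        induction k with
        | zero => intro h; rfl
        | succ k ih =>
          intro h
          rw [pow_succ, pow_succ]
          show ((σS ^ k) (σS h) : M) = (σ ^ k) (σ ↑h)
          rw [ih (σS h), hσS_apply]
      have hσSQR : σS ^ (q ^ R) = 1 := by
        apply DFunLike.ext
        intro h
        apply Subtype.ext
        rw [hσSpow (q ^ R) h, hfixall]
        rfl
      set K : Subgroup (MulAut ↥S) := Subgroup.zpowers σS with hK
      have hKp : IsPGroup q ↥K := by
        intro g
        refine ⟨R, ?_⟩
        obtain ⟨j, hj⟩ := Subgroup.mem_zpowers_iff.mp g.2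
        apply Subtype.ext
        have hcoe : ((g ^ (q ^ R) : ↥K) : MulAut ↥S) = ((g : MulAut ↥S)) ^ (q ^ R) :=
          SubmonoidClass.coe_pow g (q ^ R)
        rw [hcoe, ← hj, ← zpow_natCast (σS ^ j) (q ^ R), ← zpow_mul, mul_comm, zpow_mul,
          zpow_natCast, hσSQR, one_zpow]
        rfl
      have hmod := hKp.card_modEq_card_fixedPoints ↥S
      have hfpker : (MulAction.fixedPoints ↥K ↥S : Set ↥S) = (ψ.ker : Set ↥S) := by
        ext h
        constructor
        · intro hfp
          have hone := hfp (⟨σS, Subgroup.mem_zpowers σS⟩ : ↥K)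
          have hσh : σS h = h := hone
          have hker : ψ h = 1 := by
            apply Subtype.ext
            rw [hψ_apply]
            have hcoe : σ ↑h = ↑h := congrArg Subtype.val hσh
            rw [hcoe, mul_inv_cancel]
            rfl
          exact hker
        · intro hk
          intro g
          obtain ⟨j, hj⟩ := Subgroup.mem_zpowers_iff.mp g.2
          have h1 : ψ h = 1 := hk
          have hσh : σS h = h := by
            apply Subtype.ext
            rw [hσS_apply]
            have h2 := congrArg Subtype.val h1
            rw [hψ_apply] at h2
            have h2' : σ (↑h : M) * (↑h : M)⁻¹ = 1 := by simpa using h2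
            have h3 := mul_eq_one_iff_eq_inv.mp h2'
            simpa using h3
          show g • h = h
          have : ((g : MulAut ↥S)) h = h := by rw [← hj]; exact mulaut_fix_zpow σS hσh j
          exact this
      have hcardfp : Nat.card (MulAction.fixedPoints ↥K ↥S) = Nat.card ↥ψ.ker :=
        Nat.card_congr (Equiv.setCongr hfpker)
      have hqker : q ∣ Nat.card ↥ψ.ker := by
        have h0 : Nat.card ↥S ≡ 0 [MOD q] := (Nat.modEq_zero_iff_dvd).mpr hqS
        have h1 := hmod.symm.trans h0
        rw [hcardfp] at h1
        exact (Nat.modEq_zero_iff_dvd).mp h1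
      have he0dvd : per σ m ∣ q ^ R := per_dvd σ m hexm (hfixall m)
      have hdq : per σ c1 * q ∣ q ^ R := by
        calc per σ c1 * q ∣ per σ c1 * Nat.card ↥ψ.ker := mul_dvd_mul_left _ hqker
          _ = Nat.card ↥S := by rw [hlag, hcardrange]
          _ ∣ q ^ R := by rw [hcardS]; exact he0dvd
      have hqRsplit : q ^ R = q ^ (R - 1) * q := by
        rw [← pow_succ]; congr 1; omega
      have hdvd : per σ c1 ∣ q ^ (R - 1) := by
        rw [hqRsplit] at hdq
        exact (Nat.mul_dvd_mul_iff_right hq.pos).mp hdq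
      exact fix_of_dvd σ c1 hexc1 hdvd
  -- finish from CLAIM
  have heps : eps σ u m = (σ ^ (u : ℤ)) m * m⁻¹ := by
    rw [eps_apply, zpow_natCast]
  have hsymm := cocycle_symm σ m (u : ℤ)
  have hfix1 : (σ ^ (u : ℤ)) c1 * c1⁻¹ = 1 := by
    rw [zpow_natCast, CLAIM, mul_inv_cancel]
  rw [← hc1] at hsymm
  rw [dlt_apply, heps]
  have hone : σ ((σ ^ (u : ℤ)) m * m⁻¹) * ((σ ^ (u : ℤ)) m * m⁻¹)⁻¹ = 1 := by
    rw [hsymm]; exact hfix1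
  have hz : σ ((σ ^ (u : ℤ)) m * m⁻¹) = (σ ^ (u : ℤ)) m * m⁻¹ := by
    have h4 := mul_eq_one_iff_eq_inv.mp hone
    simpa using h4
  rw [hz]
  exact inv_mul_cancel _

universe u

lemma Sset_zero {M : Type*} [CommGroup M] (σ : MulAut M) (a : M) :
    Sset σ 0 a = {y : M | ∃ i : ℤ, y = (σ ^ i) a * a⁻¹} := by
  ext y
  constructor
  · rintro ⟨i, b, rfl⟩
    refine ⟨i, ?_⟩
    rw [pow_zero]
    show (σ ^ i) ((1 : MulAut M) b * b⁻¹) * ((σ ^ i) a * a⁻¹) = _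
    rw [show (1 : MulAut M) b = b from rfl, mul_inv_cancel, map_one, one_mul]
  · rintro ⟨i, rfl⟩
    refine ⟨i, 1, ?_⟩
    rw [pow_zero]
    show _ = (σ ^ i) ((1 : MulAut M) 1 * 1⁻¹) * ((σ ^ i) a * a⁻¹)
    rw [show (1 : MulAut M) (1 : M) = (1 : M) from rfl, mul_inv_cancel, map_one, one_mul]

section Transfer

variable {M : Type*} [CommGroup M] {N : Type*} [CommGroup N]

lemma comm_pow (σ : MulAut M) (τ : MulAut N) (π : M →* N)
    (hcomm : ∀ x, π (σ x) = τ (π x)) (k : ℕ) (x : M) : π ((σ ^ k) x) = (τ ^ k) (π x) := by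
  induction k generalizing x with
  | zero => rfl
  | succ k ih =>
    rw [pow_succ, pow_succ]
    show π ((σ ^ k) (σ x)) = (τ ^ k) (τ (π x))
    rw [ih (σ x), hcomm]

lemma comm_inv (σ : MulAut M) (τ : MulAut N) (π : M →* N)
    (hcomm : ∀ x, π (σ x) = τ (π x)) (x : M) : π (σ⁻¹ x) = τ⁻¹ (π x) := by
  apply (MulEquiv.injective τ)
  rw [← hcomm]
  show π (σ (σ⁻¹ x)) = τ (τ⁻¹ (π x))
  rw [show σ (σ⁻¹ x) = x from σ.apply_symm_apply x,
    show τ (τ⁻¹ (π x)) = π x from τ.apply_symm_apply (π x)]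

lemma comm_zpow (σ : MulAut M) (τ : MulAut N) (π : M →* N)
    (hcomm : ∀ x, π (σ x) = τ (π x)) (i : ℤ) (x : M) : π ((σ ^ i) x) = (τ ^ i) (π x) := by
  cases i with
  | ofNat k => rw [Int.ofNat_eq_coe, zpow_natCast, zpow_natCast]; exact comm_pow σ τ π hcomm k x
  | negSucc k =>
    rw [zpow_negSucc, zpow_negSucc]
    exact comm_inv (σ ^ (k + 1)) (τ ^ (k + 1)) π (comm_pow σ τ π hcomm (k + 1)) x

lemma cond_map (σ : MulAut M) (τ : MulAut N) (π : M →* N) (hsurj : Function.Surjective π)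
    (hcomm : ∀ x, π (σ x) = τ (π x)) (hc : Cond σ) : Cond τ := by
  intro k a'
  obtain ⟨a, rfl⟩ := hsurj a'
  obtain ⟨S, hS⟩ := hc k a
  refine ⟨S.map π, ?_⟩
  rw [Subgroup.coe_map, hS]
  ext y
  constructor
  · rintro ⟨z, ⟨i, b, rfl⟩, rfl⟩
    refine ⟨i, π b, ?_⟩
    simp only [map_mul, map_inv, comm_zpow σ τ π hcomm, comm_pow σ τ π hcomm]
  · rintro ⟨i, b', rfl⟩
    obtain ⟨b, rfl⟩ := hsurj b'
    refine ⟨(σ ^ i) ((σ ^ k) b * b⁻¹) * ((σ ^ i) a * a⁻¹), ⟨i, b, rfl⟩, ?_⟩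
    simp only [map_mul, map_inv, comm_zpow σ τ π hcomm, comm_pow σ τ π hcomm]

end Transfer

theorem main (r : ℕ) : ∀ {M : Type u} [CommGroup M] [Finite M] (σ : MulAut M)
    (q : ℕ), q.Prime → IsPGroup q M → Cond σ → σ ^ (q ^ r) = 1 →
    ∀ a : M, ((dlt σ ^ (r + 1) : Monoid.End M)) a = 1 := by
  induction r with
  | zero =>
    intro M _ _ σ q hq hM hcond hσ a
    rw [pow_zero, pow_one] at hσ
    rw [pow_one, dlt_apply, hσ]
    show a⁻¹ * a = 1
    rw [inv_mul_cancel]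
  | succ r ih =>
    intro M _ _ σ q hq hM hcond hσ a
    set u : ℕ := q ^ r with hu
    set W : Subgroup M := (eps σ u : M →* M).range with hW
    have heps_comm : ∀ b : M, σ (eps σ u b) = eps σ u (σ b) := by
      intro b
      rw [eps_apply, eps_apply, map_mul, map_inv]
      congr 1
      rw [← mulaut_pow_apply σ u b, pow_succ]
      rfl
    have heps_comm_inv : ∀ b : M, σ⁻¹ (eps σ u b) = eps σ u (σ⁻¹ b) := by
      intro b
      apply σ.injective
      rw [show σ (σ⁻¹ (eps σ u b)) = eps σ u b from σ.apply_symm_apply _, heps_comm]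
      congr 1
      exact (σ.apply_symm_apply b).symm
    have hWσ : ∀ x ∈ W, σ x ∈ W := by
      rintro x ⟨b, rfl⟩
      exact ⟨σ b, (heps_comm b).symm⟩
    have hWσinv : ∀ x ∈ W, σ⁻¹ x ∈ W := by
      rintro x ⟨b, rfl⟩
      exact ⟨σ⁻¹ b, (heps_comm_inv b).symm⟩
    have hle : W ≤ W.comap σ.toMonoidHom := fun x hx => hWσ x hx
    have hle' : W ≤ W.comap (σ⁻¹ : MulAut M).toMonoidHom := fun x hx => hWσinv x hx
    set Q := M ⧸ W with hQ
    letI : CommGroup Q :=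
      { (inferInstance : Group Q) with
        mul_comm := fun a b => by
          refine QuotientGroup.induction_on a fun x => ?_
          refine QuotientGroup.induction_on b fun y => ?_
          show ((x : Q) * y) = (y : Q) * x
          rw [← QuotientGroup.mk_mul, ← QuotientGroup.mk_mul, mul_comm] }
    set π : M →* Q := QuotientGroup.mk' W with hπ
    have hπsurj : Function.Surjective π := QuotientGroup.mk'_surjective W
    set F : Q →* Q := QuotientGroup.map W W σ.toMonoidHom hle with hF
    set Finv : Q →* Q := QuotientGroup.map W W (σ⁻¹ : MulAut M).toMonoidHom hle' with hFinv
    have hFmk : ∀ x : M, F (π x) = π (σ x) := fun x => QuotientGroup.map_mk W W _ hle x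
    have hFinvmk : ∀ x : M, Finv (π x) = π (σ⁻¹ x) := fun x => QuotientGroup.map_mk W W _ hle' x
    set τ : MulAut Q :=
      { toFun := F
        invFun := Finv
        left_inv := fun y => by
          refine QuotientGroup.induction_on y fun x => ?_
          show Finv (F (π x)) = π x
          rw [hFmk, hFinvmk]
          congr 1
          exact σ.symm_apply_apply x
        right_inv := fun y => by
          refine QuotientGroup.induction_on y fun x => ?_
          show F (Finv (π x)) = π x
          rw [hFinvmk, hFmk]
          congr 1
          exact σ.apply_symm_apply x
        map_mul' := F.map_mul } with hτdef
    have hcommπ : ∀ x : M, π (σ x) = τ (π x) := fun x => (hFmk x).symm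
    have hQp : IsPGroup q Q := by
      intro y
      obtain ⟨x, rfl⟩ := hπsurj y
      obtain ⟨k, hk⟩ := hM x
      exact ⟨k, by rw [← map_pow, hk, map_one]⟩
    have hcondQ : Cond τ := cond_map σ τ π hπsurj hcommπ hcond
    have hτpow : τ ^ (q ^ r) = 1 := by
      apply DFunLike.ext
      intro y
      obtain ⟨x, rfl⟩ := hπsurj y
      rw [← comm_pow σ τ π hcommπ]
      show ((((σ ^ u) x) : M) : Q) = ((x : M) : Q)
      rw [QuotientGroup.eq]
      have hmem : eps σ u x ∈ W := ⟨x, rfl⟩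
      have : ((σ ^ u) x)⁻¹ * x = (eps σ u x)⁻¹ := by
        rw [eps_apply, mul_inv, inv_inv, mul_comm]
      rw [this]
      exact inv_mem hmem
    have hIH := ih τ q hq hQp hcondQ hτpow (π a)
    have hcommdlt : ∀ x : M, π (dlt σ x) = dlt τ (π x) := by
      intro x
      rw [dlt_apply, dlt_apply, map_mul, map_inv, hcommπ]
    have hcommdltpow : ∀ (k : ℕ) (x : M),
        π ((dlt σ ^ k : Monoid.End M) x) = (dlt τ ^ k : Monoid.End Q) (π x) := by
      intro k
      induction k with
      | zero => intro x; rfl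
      | succ k ihk =>
        intro x
        rw [end_pow_succ, end_pow_succ, hcommdlt, ihk]
    have hmemW : (dlt σ ^ (r + 1) : Monoid.End M) a ∈ W := by
      rw [← QuotientGroup.eq_one_iff ((dlt σ ^ (r + 1) : Monoid.End M) a) (N := W)]
      show π ((dlt σ ^ (r + 1) : Monoid.End M) a) = 1
      rw [hcommdltpow, hIH]
    obtain ⟨mm, hmm⟩ := hmemW
    have hc0 : ∀ m : M, ∃ S : Subgroup M, (S : Set M) = {y : M | ∃ i : ℤ, y = (σ ^ i) m * m⁻¹} := by
      intro m
      obtain ⟨S, hS⟩ := hcond 0 m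
      exact ⟨S, by rw [hS, Sset_zero]⟩
    have hsub := sublemma q (r + 1) hq σ hM hσ (by omega) hc0 mm
    rw [show (r + 1) - 1 = r from by omega] at hsub
    rw [end_pow_succ, ← hmm]; exact hsub

section Torsion

variable {M : Type*} [CommGroup M]

/-- the `q`-torsion subgroup -/
def torQ (M : Type*) [CommGroup M] (q : ℕ) : Subgroup M where
  carrier := {x : M | ∃ k : ℕ, x ^ q ^ k = 1}
  one_mem' := ⟨0, one_pow _⟩
  mul_mem' := by
    rintro x y ⟨k, hk⟩ ⟨l, hl⟩
    refine ⟨k + l, ?_⟩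
    rw [mul_pow]
    have h1 : x ^ q ^ (k + l) = 1 := by
      rw [pow_add, pow_mul, hk, one_pow]
    have h2 : y ^ q ^ (k + l) = 1 := by
      rw [pow_add, mul_comm (q ^ k), pow_mul, hl, one_pow]
    rw [h1, h2, one_mul]
  inv_mem' := by
    rintro x ⟨k, hk⟩
    exact ⟨k, by rw [inv_pow, hk, inv_one]⟩

lemma mem_torQ {q : ℕ} {x : M} : x ∈ torQ M q ↔ ∃ k : ℕ, x ^ q ^ k = 1 := Iff.rfl

lemma torQ_pgroup (q : ℕ) : IsPGroup q ↥(torQ M q) := by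
  intro h
  obtain ⟨k, hk⟩ := h.2
  exact ⟨k, Subtype.ext (by rw [SubmonoidClass.coe_pow]; exact hk)⟩

variable (q : ℕ) (σ : MulAut M)

lemma torQ_inv_mem {x : M} (hx : x ∈ torQ M q) (e : MulAut M) : e x ∈ torQ M q := by
  obtain ⟨k, hk⟩ := hx
  exact ⟨k, by rw [← map_pow, hk, map_one]⟩

/-- restriction of an automorphism to the `q`-torsion subgroup -/
def restAut : MulAut ↥(torQ M q) where
  toFun x := ⟨σ ↑x, torQ_inv_mem q x.2 σ⟩
  invFun x := ⟨σ⁻¹ ↑x, torQ_inv_mem q x.2 σ⁻¹⟩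
  left_inv x := Subtype.ext (σ.symm_apply_apply ↑x)
  right_inv x := Subtype.ext (σ.apply_symm_apply ↑x)
  map_mul' x y := Subtype.ext (by push_cast; rw [map_mul])

lemma restAut_coe (x : ↥(torQ M q)) : ((restAut q σ) x : M) = σ ↑x := rfl

lemma restAut_inv_coe (x : ↥(torQ M q)) : ((restAut q σ)⁻¹ x : M) = σ⁻¹ ↑x := rfl

lemma restAut_pow_coe (k : ℕ) (x : ↥(torQ M q)) :
    ((restAut q σ ^ k) x : M) = (σ ^ k) ↑x := by
  induction k generalizing x with
  | zero => rfl
  | succ k ih =>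
    rw [pow_succ, pow_succ]
    show ((restAut q σ ^ k) ((restAut q σ) x) : M) = (σ ^ k) (σ ↑x)
    rw [ih, restAut_coe]

lemma restAut_zpow_coe (i : ℤ) (x : ↥(torQ M q)) :
    ((restAut q σ ^ i) x : M) = (σ ^ i) ↑x := by
  cases i with
  | ofNat k =>
    rw [Int.ofNat_eq_coe, zpow_natCast, zpow_natCast]
    exact restAut_pow_coe q σ k x
  | negSucc k =>
    rw [zpow_negSucc, zpow_negSucc]
    apply (MulEquiv.injective (σ ^ (k + 1)))
    rw [show (σ ^ (k + 1)) ((σ ^ (k + 1))⁻¹ ↑x) = ↑x from (σ ^ (k + 1)).apply_symm_apply ↑x,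
      ← restAut_pow_coe q σ (k + 1)]
    congr 1
    exact (restAut q σ ^ (k + 1)).apply_symm_apply x

lemma dlt_restAut_coe (x : ↥(torQ M q)) : ((dlt (restAut q σ)) x : M) = dlt σ ↑x := rfl

lemma dlt_restAut_pow_coe (k : ℕ) (x : ↥(torQ M q)) :
    (((dlt (restAut q σ)) ^ k : Monoid.End ↥(torQ M q)) x : M)
      = (dlt σ ^ k : Monoid.End M) ↑x := by
  induction k generalizing x with
  | zero => rfl
  | succ k ih =>
    rw [end_pow_succ', end_pow_succ', ih, dlt_restAut_coe]


lemma restAut_term_coe (i : ℤ) (k : ℕ) (b a : ↥(torQ M q)) :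
    (((restAut q σ ^ i) ((restAut q σ ^ k) b * b⁻¹) * ((restAut q σ ^ i) a * a⁻¹) :
      ↥(torQ M q)) : M)
    = (σ ^ i) ((σ ^ k) ↑b * (↑b : M)⁻¹) * ((σ ^ i) ↑a * (↑a : M)⁻¹) := by
  have h1 : (((restAut q σ ^ i) ((restAut q σ ^ k) b * b⁻¹) : ↥(torQ M q)) : M)
      = (σ ^ i) ((((restAut q σ ^ k) b * b⁻¹ : ↥(torQ M q))) : M) := restAut_zpow_coe q σ i _
  have h2 : ((((restAut q σ ^ k) b * b⁻¹ : ↥(torQ M q))) : M) = (σ ^ k) ↑b * (↑b : M)⁻¹ := by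
    rw [show ((((restAut q σ ^ k) b * b⁻¹ : ↥(torQ M q))) : M)
      = ((restAut q σ ^ k) b : M) * ((b : M))⁻¹ from rfl, restAut_pow_coe]
  have h3 : (((restAut q σ ^ i) a * a⁻¹ : ↥(torQ M q)) : M) = (σ ^ i) ↑a * (↑a : M)⁻¹ := by
    rw [show ((((restAut q σ ^ i) a * a⁻¹ : ↥(torQ M q))) : M)
      = ((restAut q σ ^ i) a : M) * ((a : M))⁻¹ from rfl, restAut_zpow_coe]
  rw [show (((restAut q σ ^ i) ((restAut q σ ^ k) b * b⁻¹) * ((restAut q σ ^ i) a * a⁻¹) :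
      ↥(torQ M q)) : M)
    = (((restAut q σ ^ i) ((restAut q σ ^ k) b * b⁻¹) : ↥(torQ M q)) : M) *
      (((restAut q σ ^ i) a * a⁻¹ : ↥(torQ M q)) : M) from rfl, h1, h2, h3]

lemma cond_restrict (hc : Cond σ) (c : ℕ) (hc1 : ∀ x : M, x ^ c ∈ torQ M q)
    (hc2 : ∀ x ∈ torQ M q, x ^ c = x) : Cond (restAut q σ) := by
  intro k a
  obtain ⟨S, hS⟩ := hc k ↑a
  refine ⟨S.subgroupOf (torQ M q), ?_⟩
  ext y
  rw [SetLike.mem_coe, Subgroup.mem_subgroupOf]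
  constructor
  · intro hy
    have hy' : (y : M) ∈ Sset σ k ↑a := by rw [← hS]; exact hy
    obtain ⟨i, b, hyb⟩ := hy'
    set z : M := (σ ^ i) ((σ ^ k) b * b⁻¹) with hz
    have hzmem : z ∈ torQ M q := by
      have hz2 : z = ↑y * ((σ ^ i) ↑a * (↑a)⁻¹)⁻¹ := by rw [hyb]; group
      rw [hz2]
      refine mul_mem y.2 (inv_mem (mul_mem ?_ (inv_mem a.2)))
      rw [← restAut_zpow_coe q σ i a]
      exact ((restAut q σ ^ i) a).2
    have hzc : z ^ c = z := hc2 z hzmem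
    have hzc2 : z ^ c = (σ ^ i) ((σ ^ k) (b ^ c) * (b ^ c)⁻¹) := by
      rw [hz, ← map_pow, mul_pow, ← map_pow, inv_pow]
    refine ⟨i, ⟨b ^ c, hc1 b⟩, Subtype.ext ?_⟩
    rw [restAut_term_coe]
    show (y : M) = (σ ^ i) ((σ ^ k) (b ^ c) * (b ^ c)⁻¹) * ((σ ^ i) ↑a * (↑a : M)⁻¹)
    rw [← hzc2, hzc]
    exact hyb
  · rintro ⟨i, b, rfl⟩
    have : ((((restAut q σ) ^ i) ((restAut q σ ^ k) b * b⁻¹) * (((restAut q σ) ^ i) a * a⁻¹) :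
        ↥(torQ M q)) : M) ∈ (S : Set M) := by
      rw [hS, restAut_term_coe]
      exact ⟨i, ↑b, rfl⟩
    exact this

lemma rest_period (n : ℕ) (hn : n ≠ 0) (hq : q.Prime) [Finite M] (hσn : σ ^ n = 1)
    (hcT : Cond (restAut q σ)) :
    (restAut q σ) ^ (q ^ (n.factorization q)) = 1 := by
  haveI : Fact q.Prime := ⟨hq⟩
  set ρ : MulAut ↥(torQ M q) := restAut q σ with hρ
  have hρn : ρ ^ n = 1 := by
    apply DFunLike.ext
    intro x
    apply Subtype.ext
    rw [restAut_pow_coe, hσn]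
    rfl
  apply DFunLike.ext
  intro x
  have hex : ∃ d : ℕ, 0 < d ∧ (ρ ^ d) x = x :=
    ⟨n, Nat.pos_of_ne_zero hn, by rw [hρn]; rfl⟩
  have hperdvd : per ρ x ∣ n := per_dvd ρ x hex (by rw [hρn]; rfl)
  obtain ⟨S, hS⟩ := hcT 0 x
  rw [Sset_zero] at hS
  have hcardS : Nat.card ↥S = per ρ x := by
    rw [← card_orbit_diff ρ x hex]
    exact Nat.card_congr (Equiv.setCongr hS)
  have hSp : IsPGroup q ↥S := by
    intro s
    obtain ⟨k, hk⟩ := torQ_pgroup (M := M) q ↑s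
    exact ⟨k, Subtype.ext (by rw [SubmonoidClass.coe_pow]; exact hk)⟩
  obtain ⟨α, hα⟩ := IsPGroup.iff_card.mp hSp
  have hqα : q ^ α ∣ n := by
    rw [← hα, hcardS]
    exact hperdvd
  have hαle : α ≤ n.factorization q := (Nat.Prime.pow_dvd_iff_le_factorization hq hn).mp hqα
  have hdvd : per ρ x ∣ q ^ (n.factorization q) := by
    rw [← hcardS, hα]
    exact pow_dvd_pow q hαle
  show (ρ ^ q ^ (n.factorization q)) x = x
  exact fix_of_dvd ρ x hex hdvd

lemma exists_qpart_exponent [Finite M] (hq : q.Prime) :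
    ∃ c : ℕ, (∀ x : M, x ^ c ∈ torQ M q) ∧ (∀ x ∈ torQ M q, x ^ c = x) := by
  set e : ℕ := Nat.card M with he
  have he0 : e ≠ 0 := Nat.card_pos.ne'
  set β : ℕ := e.factorization q with hβ
  set e' : ℕ := e / q ^ β with he'
  have hsplit : q ^ β * e' = e := Nat.ordProj_mul_ordCompl_eq_self e q
  have hco : Nat.Coprime (q ^ β) e' :=
    Nat.Coprime.pow_left _ (Nat.coprime_ordCompl hq he0)
  obtain ⟨c₀, hc₀1, hc₀2⟩ := Nat.chineseRemainder hco 1 0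
  set c : ℕ := c₀ + q ^ β * e' with hc
  have h1 : c ≡ 1 [MOD q ^ β] := by
    have : q ^ β * e' ≡ 0 [MOD q ^ β] := (Nat.modEq_zero_iff_dvd).mpr (dvd_mul_right _ _)
    have h' := hc₀1.add this; rw [add_zero] at h'; exact h'
  have h2 : e' ∣ c := by
    have ha : e' ∣ c₀ := (Nat.modEq_zero_iff_dvd).mp hc₀2
    exact dvd_add ha (dvd_mul_left _ _)
  refine ⟨c, ?_, ?_⟩
  · intro x
    refine ⟨β, ?_⟩
    rw [← pow_mul]
    obtain ⟨s, hs⟩ := h2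
    have : c * q ^ β = e * s := by
      rw [hs, ← hsplit]; ring
    rw [this, pow_mul, pow_card_eq_one', one_pow]
  · rintro x ⟨k, hk⟩
    have hord : orderOf x ∣ q ^ k := orderOf_dvd_of_pow_eq_one hk
    obtain ⟨γ, hγle, hγ⟩ := (Nat.dvd_prime_pow hq).mp hord
    have hγβ : γ ≤ β := by
      apply (Nat.Prime.pow_dvd_iff_le_factorization hq he0).mp
      rw [← hγ]
      exact orderOf_dvd_of_pow_eq_one (pow_card_eq_one' (G := M))
    have hxβ : x ^ q ^ β = 1 := by
      apply orderOf_dvd_iff_pow_eq_one.mp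
      rw [hγ]
      exact pow_dvd_pow q hγβ
    have hc1le : 1 ≤ c := by
      have : 1 ≤ q ^ β * e' := by rw [hsplit]; omega
      omega
    have hdvd : q ^ β ∣ c - 1 := (Nat.modEq_iff_dvd' hc1le).mp h1.symm
    obtain ⟨s, hs⟩ := hdvd
    calc x ^ c = x ^ (1 + (c - 1)) := by congr 1; omega
      _ = x * (x ^ q ^ β) ^ s := by rw [pow_add, pow_one, hs, pow_mul]
      _ = x := by rw [hxβ, one_pow, mul_one]

lemma dlt_pow_eq_one_all [Finite M] (hcond : Cond σ) (n N : ℕ) (hn0 : n ≠ 0)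
    (hσn : σ ^ n = 1) (hfac : ∀ q : ℕ, q.Prime → n.factorization q ≤ N) :
    ∀ a : M, (dlt σ ^ (N + 1) : Monoid.End M) a = 1 := by
  have key : ∀ (e : ℕ) (a : M), orderOf a = e → (dlt σ ^ (N + 1) : Monoid.End M) a = 1 := by
    intro e
    induction e using Nat.strong_induction_on with
    | _ e IH =>
      intro a ha
      by_cases h1 : e = 1
      · have : a = 1 := orderOf_eq_one_iff.mp (by rw [ha, h1])
        rw [this, map_one]
      · set q : ℕ := e.minFac with hqdef
        have hq : q.Prime := Nat.minFac_prime h1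
        have he0 : e ≠ 0 := by
          rw [← ha]
          exact (orderOf_pos a).ne' 
        set β : ℕ := e.factorization q with hβdef
        set u : ℕ := q ^ β with hudef
        set v : ℕ := e / u with hvdef
        have hsplit : u * v = e := Nat.ordProj_mul_ordCompl_eq_self e q
        by_cases hv1 : v = 1
        · -- prime power order : use main
          have hue : u = e := by rw [← hsplit, hv1, mul_one]
          have haT : a ∈ torQ M q := by
            refine ⟨β, ?_⟩
            show a ^ q ^ β = 1
            rw [← hudef, hue, ← ha]
            exact pow_orderOf_eq_one a
          obtain ⟨c, hcc1, hcc2⟩ := exists_qpart_exponent (M := M) q hq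
          have hcondT := cond_restrict q σ hcond c hcc1 hcc2
          have hperiod := rest_period q σ n hn0 hq hσn hcondT
          set r : ℕ := n.factorization q with hrdef
          have hmain := main r (restAut q σ) q hq (torQ_pgroup q) hcondT hperiod ⟨a, haT⟩
          have hcoe := dlt_restAut_pow_coe q σ (r + 1) ⟨a, haT⟩
          rw [hmain] at hcoe
          have hr1 : (dlt σ ^ (r + 1) : Monoid.End M) a = 1 := by rw [← hcoe]; rfl
          have hle : r ≤ N := hfac q hq
          have hsplitN : (N + 1) = (N - r) + (r + 1) := by omega
          rw [hsplitN, pow_add]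
          show (dlt σ ^ (N - r) : Monoid.End M) ((dlt σ ^ (r + 1) : Monoid.End M) a) = 1
          rw [hr1, map_one]
        · -- split into coprime parts
          have hv0 : v ≠ 0 := by
            intro h0
            rw [h0, mul_zero] at hsplit
            exact he0 hsplit.symm
          have hβpos : 0 < β := hq.factorization_pos_of_dvd he0 (Nat.minFac_dvd e)
          have hu1 : 1 < u := by
            calc 1 < q := hq.one_lt
              _ ≤ q ^ β := Nat.le_self_pow (by omega) q
          have hvlt : v < e := by
            have h1v : 1 * v < u * v := (Nat.mul_lt_mul_right (Nat.pos_of_ne_zero hv0)).mpr hu1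
            rw [one_mul] at h1v
            rw [← hsplit]
            exact h1v
          have hult : u < e := by
            have hv2 : 2 ≤ v := by
              rcases Nat.lt_or_ge v 2 with h | h
              · interval_cases v <;> simp_all
              · exact h
            have h2 : u * 1 < u * v := (Nat.mul_lt_mul_left (by omega)).mpr (by omega)
            rw [mul_one] at h2
            rw [← hsplit]
            exact h2
          have hco : Nat.Coprime u v := Nat.Coprime.pow_left _ (Nat.coprime_ordCompl hq he0)
          have hav : (a ^ u) ^ v = 1 := by
            rw [← pow_mul, hsplit, ← ha, pow_orderOf_eq_one]
          have hau : (a ^ v) ^ u = 1 := by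
            rw [← pow_mul, mul_comm, hsplit, ← ha, pow_orderOf_eq_one]
          have hIco : IsCoprime (u : ℤ) (v : ℤ) := by
            rw [Int.isCoprime_iff_gcd_eq_one, Int.gcd_natCast_natCast]
            exact hco
          obtain ⟨s, t, hst⟩ := hIco
          set b : M := (a ^ u) ^ s with hb
          set d : M := (a ^ v) ^ t with hd
          have hab : a = b * d := by
            rw [hb, hd, ← zpow_natCast a u, ← zpow_natCast a v, ← zpow_mul, ← zpow_mul,
              ← zpow_add]
            rw [show (u : ℤ) * s + (v : ℤ) * t = 1 from by linarith [hst]]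
            rw [zpow_one]
          have hbord : orderOf b ∣ v := by
            apply orderOf_dvd_of_pow_eq_one
            rw [hb, ← zpow_natCast ((a ^ u) ^ s) v, ← zpow_mul, mul_comm, zpow_mul,
              zpow_natCast, hav, one_zpow]
          have hdord : orderOf d ∣ u := by
            apply orderOf_dvd_of_pow_eq_one
            rw [hd, ← zpow_natCast ((a ^ v) ^ t) u, ← zpow_mul, mul_comm, zpow_mul,
              zpow_natCast, hau, one_zpow]
          have hbe : orderOf b < e :=
            lt_of_le_of_lt (Nat.le_of_dvd (Nat.pos_of_ne_zero hv0) hbord) hvlt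
          have hde : orderOf d < e :=
            lt_of_le_of_lt (Nat.le_of_dvd (by omega) hdord) hult
          have h1 := IH (orderOf b) hbe b rfl
          have h2 := IH (orderOf d) hde d rfl
          rw [hab, map_mul, h1, h2, one_mul]
  intro a
  exact key (orderOf a) a rfl

end Torsion

end TC

/-- The twisted conjugacy class of the identity under the automorphism `φ`:
`[e]_φ = {g⁻¹ · φ(g) : g ∈ G}`. -/
def twistedClassAut {G : Type*} [Group G] (φ : G ≃* G) : Set G :=
  {y : G | ∃ g : G, y = g⁻¹ * φ g}

open TC commutatorElement in
theorem stmt_19 {G : Type*} [Group G] [Finite G]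
    (m : ℕ) (p : Fin m → ℕ) (nexp : Fin m → ℕ)
    (hp : ∀ i, (p i).Prime) (hdist : Function.Injective p)
    (hnexp : ∀ i, 1 ≤ nexp i)
    (n : ℕ) (hn : n = ∏ i : Fin m, p i ^ nexp i) (hodd : Odd n)
    (A : Subgroup G) (hA : A.Normal)
    (hcomm : ∀ a ∈ A, ∀ b ∈ A, a * b = b * a)
    (hcyc : IsCyclic (G ⧸ A)) (hcard : Nat.card (G ⧸ A) = n)
    (h : ∀ φ : G ≃* G, ∃ H : Subgroup G, (H : Set G) = twistedClassAut φ) :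
    (⊤ : Subgroup G).lowerCentralSeries (Finset.univ.sup nexp + 1) = ⊥ := by
  classical
  haveI := hA
  letI commA : CommGroup ↥A :=
    { (inferInstance : Group ↥A) with
      mul_comm := fun x y => Subtype.ext (hcomm ↑x x.2 ↑y y.2) }
  have hn0 : n ≠ 0 := by
    rw [hn]
    exact Finset.prod_ne_zero_iff.mpr (fun i _ => pow_ne_zero _ (hp i).pos.ne')
  obtain ⟨g₀, hg₀⟩ := hcyc.exists_generator
  obtain ⟨t, ht⟩ := QuotientGroup.mk'_surjective A g₀
  have hdecomp : ∀ g : G, ∃ (i : ℤ) (b : ↥A), g = ↑b * t ^ i := by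
    intro g
    obtain ⟨i, hi⟩ := Subgroup.mem_zpowers_iff.mp (hg₀ (QuotientGroup.mk' A g))
    have hmem : g * (t ^ i)⁻¹ ∈ A := by
      rw [← QuotientGroup.eq_one_iff]
      have h2 : ((g * (t ^ i)⁻¹ : G) : G ⧸ A)
          = (QuotientGroup.mk' A g) * ((QuotientGroup.mk' A t) ^ i)⁻¹ := by
        rw [← map_zpow, ← map_inv, ← map_mul]
        rfl
      rw [h2, ht, ← hi, mul_inv_cancel]
    exact ⟨i, ⟨g * (t ^ i)⁻¹, hmem⟩, by group⟩
  set σ : MulAut ↥A := MulAut.conjNormal t with hσdef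
  have hσzpow : ∀ (i : ℤ) (z : ↥A), ((σ ^ i) z : G) = t ^ i * ↑z * (t ^ i)⁻¹ := by
    intro i z
    have h1 : σ ^ i = MulAut.conjNormal (t ^ i) := by rw [hσdef, map_zpow]
    rw [h1, MulAut.conjNormal_apply]
  have htA : ∀ (i : ℤ) (z : ↥A), t ^ i * (z : G) = ((σ ^ i) z : G) * t ^ i := by
    intro i z
    rw [hσzpow]
    group
  have htn : t ^ n ∈ A := by
    rw [← QuotientGroup.eq_one_iff]
    have h2 : ((t ^ n : G) : G ⧸ A) = (QuotientGroup.mk' A t) ^ n := by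
      rw [← map_pow]; rfl
    rw [h2, ht, ← hcard]
    exact pow_card_eq_one'
  have hσn : σ ^ n = 1 := by
    apply DFunLike.ext
    intro z
    apply Subtype.ext
    have h1 : ((σ ^ n) z : G) = ((σ ^ (n : ℤ)) z : G) := by rw [zpow_natCast]
    rw [h1, hσzpow]
    have h2 : t ^ (n : ℤ) = t ^ n := zpow_natCast t n
    rw [h2]
    have h3 := hcomm (t ^ n) htn ↑z z.2
    rw [h3, mul_inv_cancel_right]
    rfl
  -- the condition
  letI commQ : CommGroup (G ⧸ A) := by
    haveI := hcyc
    exact IsCyclic.commGroup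
  have hcond : Cond σ := by
    intro k a
    set x : G := ↑a * t ^ k with hx
    obtain ⟨Hg, hHg⟩ := h (MulAut.conj x)
    have hxz : x = ↑a * t ^ (k : ℤ) := by rw [hx, zpow_natCast]
    -- key computation
    have KEY : ∀ (i : ℤ) (b : ↥A),
        (↑b * t ^ i)⁻¹ * ((MulAut.conj x) (↑b * t ^ i))
          = ↑((σ ^ (-i)) ((σ ^ k) b * b⁻¹) * ((σ ^ (-i)) a * a⁻¹)) := by
      intro i b
      set K : ℤ := (k : ℤ) with hK
      set β : ↥A := (σ ^ K) b with hβ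
      have f1 : t ^ K * (b : G) = (β : G) * t ^ K := htA K b
      set w : ↥A := b⁻¹ * a * β with hw
      have hwcoe : (w : G) = ((b : G))⁻¹ * ↑a * ↑β := rfl
      have hconjapp : (MulAut.conj x) (↑b * t ^ i) = x * (↑b * t ^ i) * x⁻¹ := by
        simp [MulAut.conj_apply]
      calc (↑b * t ^ i)⁻¹ * ((MulAut.conj x) (↑b * t ^ i))
          = t ^ (-i) * ((b : G))⁻¹ * ↑a * (t ^ K * ↑b) * t ^ i * t ^ (-K) * (↑a : G)⁻¹ := by
            rw [hconjapp, hxz]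
            group
        _ = t ^ (-i) * ((b : G))⁻¹ * ↑a * (↑β * t ^ K) * t ^ i * t ^ (-K) * (↑a : G)⁻¹ := by
            rw [f1]
        _ = t ^ (-i) * ((w : G)) * (t ^ (-i))⁻¹ * (↑a : G)⁻¹ := by
            rw [hwcoe]
            group
        _ = ↑((σ ^ (-i)) w) * (↑a : G)⁻¹ := by rw [hσzpow (-i) w]
        _ = ↑((σ ^ (-i)) w * a⁻¹) := rfl
        _ = ↑((σ ^ (-i)) ((σ ^ k) b * b⁻¹) * ((σ ^ (-i)) a * a⁻¹)) := by
            congr 1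
            have hKk : (σ ^ K) b = (σ ^ k) b := by rw [hK, zpow_natCast]
            rw [hw, hβ, hKk]
            rw [map_mul, map_mul, map_mul, map_inv]
            simp [mul_assoc, mul_comm, mul_left_comm]
    have hHgA : Hg ≤ A := by
      intro y hy
      have hy' : y ∈ twistedClassAut (MulAut.conj x) := by rw [← hHg]; exact hy
      obtain ⟨g, rfl⟩ := hy'
      obtain ⟨i, b, rfl⟩ := hdecomp g
      rw [KEY i b]
      exact ((σ ^ (-i)) ((σ ^ k) b * b⁻¹) * ((σ ^ (-i)) a * a⁻¹)).2
    refine ⟨Hg.subgroupOf A, ?_⟩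
    ext y
    rw [SetLike.mem_coe, Subgroup.mem_subgroupOf]
    have hyiff : ((y : G) ∈ Hg) ↔ ((y : G) ∈ twistedClassAut (MulAut.conj x)) := by
      constructor
      · intro hh; rw [← hHg]; exact hh
      · intro hh; rw [← hHg] at hh; exact hh
    rw [hyiff]
    constructor
    · rintro ⟨g, hg⟩
      obtain ⟨i, b, rfl⟩ := hdecomp g
      rw [KEY i b] at hg
      exact ⟨-i, b, Subtype.ext hg⟩
    · rintro ⟨j, b, rfl⟩
      refine ⟨↑b * t ^ (-j), ?_⟩
      rw [KEY (-j) b, neg_neg]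
  -- lower central series
  set Δ : Monoid.End ↥A := dlt σ with hΔ
  have hΔσ : ∀ z : ↥A, Δ (σ z) = σ (Δ z) := by
    intro z
    rw [hΔ, dlt_apply, dlt_apply, map_mul, map_inv]
  have hΔpowσ : ∀ (j : ℕ) (z : ↥A), (Δ ^ j : Monoid.End ↥A) (σ z) = σ ((Δ ^ j) z) := by
    intro j
    induction j with
    | zero => intro z; rfl
    | succ j ihj =>
      intro z
      rw [end_pow_succ, end_pow_succ, ihj, hΔσ]
  have hσrange : ∀ (j : ℕ) (w : ↥A), w ∈ (Δ ^ j : Monoid.End ↥A).range →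
      σ w ∈ (Δ ^ j : Monoid.End ↥A).range := by
    rintro j w ⟨y, rfl⟩
    exact ⟨σ y, hΔpowσ j y⟩
  have hσinvrange : ∀ (j : ℕ) (w : ↥A), w ∈ (Δ ^ j : Monoid.End ↥A).range →
      σ⁻¹ w ∈ (Δ ^ j : Monoid.End ↥A).range := by
    rintro j w ⟨y, rfl⟩
    refine ⟨σ⁻¹ y, ?_⟩
    apply σ.injective
    show σ ((Δ ^ j : Monoid.End ↥A) (σ⁻¹ y)) = σ (σ⁻¹ ((Δ ^ j : Monoid.End ↥A) y))
    rw [← hΔpowσ j (σ⁻¹ y), show σ (σ⁻¹ y) = y from σ.apply_symm_apply y,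
      show σ (σ⁻¹ ((Δ ^ j : Monoid.End ↥A) y)) = (Δ ^ j : Monoid.End ↥A) y from
        σ.apply_symm_apply _]
  have hL1 : ∀ (kk : ℕ) (i : ℤ) (z : ↥A), z ∈ (Δ ^ kk : Monoid.End ↥A).range →
      z⁻¹ * (σ ^ i) z ∈ (Δ ^ (kk + 1) : Monoid.End ↥A).range := by
    intro kk i
    induction i using Int.induction_on with
    | zero =>
      intro z _
      rw [zpow_zero]
      rw [show ((1 : MulAut ↥A) z) = z from rfl, inv_mul_cancel]
      exact one_mem _
    | succ i ih =>
      intro z hz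
      have hstep : z⁻¹ * (σ ^ ((i : ℤ) + 1)) z = (z⁻¹ * σ z) * σ (z⁻¹ * (σ ^ (i : ℤ)) z) := by
        rw [map_mul, map_inv]
        have h2 : σ ((σ ^ (i : ℤ)) z) = (σ ^ ((i : ℤ) + 1)) z := by
          rw [add_comm, zpow_add_apply σ z 1 (i : ℤ), zpow_one]
        rw [h2]
        group
      rw [hstep]
      refine mul_mem ?_ (hσrange _ _ (ih z hz))
      obtain ⟨y, hy⟩ := hz
      exact ⟨y, by show (Δ ^ (kk + 1) : Monoid.End ↥A) y = _; rw [end_pow_succ, show (Δ ^ kk : Monoid.End ↥A) y = z from hy, hΔ, dlt_apply]⟩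
    | pred i ih =>
      intro z hz
      have hstep : z⁻¹ * (σ ^ (-(i : ℤ) - 1)) z
          = σ⁻¹ ((z⁻¹ * σ z)⁻¹ * (z⁻¹ * (σ ^ (-(i : ℤ))) z)) := by
        have hinner : (z⁻¹ * σ z)⁻¹ * (z⁻¹ * (σ ^ (-(i : ℤ))) z) = (σ z)⁻¹ * (σ ^ (-(i : ℤ))) z := by
          group
        rw [hinner, map_mul, map_inv]
        have h3 : σ⁻¹ (σ z) = z := σ.symm_apply_apply z
        have h2 : σ⁻¹ ((σ ^ (-(i : ℤ))) z) = (σ ^ (-(i : ℤ) - 1)) z := by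
          have h4 : (σ ^ (-(i : ℤ) - 1)) z = (σ ^ ((-1) + (-(i : ℤ)))) z := by ring_nf
          rw [h4, zpow_add_apply σ z (-1) (-(i : ℤ)), zpow_neg_one]
        rw [h3, h2]
      rw [hstep]
      apply hσinvrange
      refine mul_mem (inv_mem ?_) (ih z hz)
      obtain ⟨y, hy⟩ := hz
      exact ⟨y, by show (Δ ^ (kk + 1) : Monoid.End ↥A) y = _; rw [end_pow_succ, show (Δ ^ kk : Monoid.End ↥A) y = z from hy, hΔ, dlt_apply]⟩
  have hzero_mem : ∀ z : ↥A, z ∈ (Δ ^ 0 : Monoid.End ↥A).range := fun z => ⟨z, rfl⟩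
  have hLCS : ∀ kk : ℕ, (⊤ : Subgroup G).lowerCentralSeries (kk + 1)
      ≤ Subgroup.map A.subtype (Δ ^ (kk + 1) : Monoid.End ↥A).range := by
    intro kk
    induction kk with
    | zero =>
      rw [Subgroup.top_lowerCentralSeries_one, commutator_def]
      rw [Subgroup.commutator_le]
      intro g _ h₂ _
      obtain ⟨i, bg, rfl⟩ := hdecomp g
      obtain ⟨j, bh, rfl⟩ := hdecomp h₂
      have hmove : t ^ j * ((bg : G))⁻¹ = ((((σ ^ j) bg⁻¹) : ↥A) : G) * t ^ j := by
        rw [show (((bg : G))⁻¹ : G) = ((bg⁻¹ : ↥A) : G) from rfl]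
        exact htA j bg⁻¹
      have hcval : ⁅(↑bg * t ^ i : G), (↑bh * t ^ j : G)⁆
          = ↑(bg * (σ ^ i) bh * (σ ^ j) bg⁻¹ * bh⁻¹) := by
        calc ⁅(↑bg * t ^ i : G), (↑bh * t ^ j : G)⁆
            = ↑bg * (t ^ i * ↑bh) * t ^ j * t ^ (-i) * ((bg : G))⁻¹ * t ^ (-j) * ((bh : G))⁻¹ := by
              rw [commutatorElement_def]
              group
          _ = ↑bg * (↑((σ ^ i) bh) * t ^ i) * t ^ j * t ^ (-i) * ((bg : G))⁻¹ * t ^ (-j) *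
              ((bh : G))⁻¹ := by rw [htA i bh]
          _ = ↑bg * ↑((σ ^ i) bh) * ((t ^ j * ((bg : G))⁻¹) * t ^ (-j)) * ((bh : G))⁻¹ := by
              group
          _ = ↑bg * ↑((σ ^ i) bh) * ((↑((σ ^ j) bg⁻¹) * t ^ j) * t ^ (-j)) * ((bh : G))⁻¹ := by
              rw [hmove]
          _ = ↑(bg * (σ ^ i) bh * (σ ^ j) bg⁻¹ * bh⁻¹) := by
              push_cast
              group
      rw [hcval]
      have hmemA : bg * (σ ^ i) bh * (σ ^ j) bg⁻¹ * bh⁻¹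
          ∈ (Δ ^ (0 + 1) : Monoid.End ↥A).range := by
        have hrw : bg * (σ ^ i) bh * (σ ^ j) bg⁻¹ * bh⁻¹
            = (bg⁻¹ * (σ ^ j) bg)⁻¹ * (bh⁻¹ * (σ ^ i) bh) := by
          rw [map_inv]
          simp [mul_assoc, mul_comm, mul_left_comm]
        rw [hrw]
        exact mul_mem (inv_mem (hL1 0 j bg (hzero_mem bg))) (hL1 0 i bh (hzero_mem bh))
      exact ⟨_, hmemA, rfl⟩
    | succ kk ih =>
      rw [Subgroup.lowerCentralSeries_succ, Subgroup.commutator_def]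
      refine (Subgroup.closure_le _).mpr ?_
      rintro xx ⟨xg, hxg, g, -, rfl⟩
      obtain ⟨z, hzr, rfl⟩ := ih hxg
      obtain ⟨i, b, rfl⟩ := hdecomp g
      have hcval : (A.subtype z : G) * (↑b * t ^ i) * (A.subtype z : G)⁻¹ * (↑b * t ^ i)⁻¹
          = ↑(z * b * (σ ^ i) z⁻¹ * b⁻¹) := by
        calc (A.subtype z : G) * (↑b * t ^ i) * (A.subtype z : G)⁻¹ * (↑b * t ^ i)⁻¹
            = (z : G) * (↑b * (t ^ i * ((z : G))⁻¹) * t ^ (-i) * ((b : G))⁻¹) := by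
              show (z : G) * (↑b * t ^ i) * ((z : G))⁻¹ * (↑b * t ^ i)⁻¹ = _
              group
          _ = (z : G) * (↑b * (↑((σ ^ i) z⁻¹) * t ^ i) * t ^ (-i) * ((b : G))⁻¹) := by
              rw [show (((z : G))⁻¹ : G) = ((z⁻¹ : ↥A) : G) from rfl, htA i z⁻¹]
          _ = ↑(z * b * (σ ^ i) z⁻¹ * b⁻¹) := by
              push_cast
              group
      rw [commutatorElement_def, hcval]
      have hmemA : z * b * (σ ^ i) z⁻¹ * b⁻¹
          ∈ (Δ ^ (kk + 1 + 1) : Monoid.End ↥A).range := by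
        have hrw : z * b * (σ ^ i) z⁻¹ * b⁻¹ = (z⁻¹ * (σ ^ i) z)⁻¹ := by
          rw [map_inv]
          simp [mul_assoc, mul_comm, mul_left_comm]
        rw [hrw]
        exact inv_mem (hL1 (kk + 1) i z hzr)
      exact ⟨_, hmemA, rfl⟩
  -- factorization bound
  set N : ℕ := Finset.univ.sup nexp with hN
  have hfac : ∀ q : ℕ, q.Prime → n.factorization q ≤ N := by
    intro q hq
    by_cases hqn : q ∣ n
    · have hqn' : q ∣ ∏ i : Fin m, p i ^ nexp i := by rw [← hn]; exact hqn
      obtain ⟨i, _, hqi⟩ := (hq.prime).exists_mem_finset_dvd hqn'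
      have hqp : q = p i :=
        (Nat.prime_dvd_prime_iff_eq hq (hp i)).mp (hq.dvd_of_dvd_pow hqi)
      have hrest : n = p i ^ nexp i * ∏ j ∈ Finset.univ.erase i, p j ^ nexp j := by
        rw [hn, ← Finset.mul_prod_erase Finset.univ _ (Finset.mem_univ i)]
      have hqrest : ¬ q ∣ ∏ j ∈ Finset.univ.erase i, p j ^ nexp j := by
        intro hdvd
        obtain ⟨j, hj, hqj⟩ := (hq.prime).exists_mem_finset_dvd hdvd
        have h1 : q = p j :=
          (Nat.prime_dvd_prime_iff_eq hq (hp j)).mp (hq.dvd_of_dvd_pow hqj)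
        have h2 : p i = p j := by rw [← hqp, h1]
        exact (Finset.mem_erase.mp hj).1 (hdist h2).symm
      have hco : Nat.Coprime (q ^ n.factorization q)
          (∏ j ∈ Finset.univ.erase i, p j ^ nexp j) :=
        Nat.Coprime.pow_left _ ((Nat.Prime.coprime_iff_not_dvd hq).mpr hqrest)
      have hdvdn : q ^ n.factorization q
          ∣ p i ^ nexp i * ∏ j ∈ Finset.univ.erase i, p j ^ nexp j := by
        rw [← hrest]
        exact Nat.ordProj_dvd n q
      have h2 : q ^ n.factorization q ∣ p i ^ nexp i := hco.dvd_of_dvd_mul_right hdvdn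
      rw [← hqp] at h2
      have h3 : n.factorization q ≤ nexp i := (Nat.pow_dvd_pow_iff_le_right hq.one_lt).mp h2
      exact le_trans h3 (Finset.le_sup (Finset.mem_univ i))
    · rw [Nat.factorization_eq_zero_of_not_dvd hqn]
      omega
  have hall := dlt_pow_eq_one_all σ hcond n N hn0 hσn hfac
  have hrange : ((Δ ^ (N + 1) : Monoid.End ↥A) : ↥A →* ↥A).range = ⊥ := by
    rw [eq_bot_iff]
    rintro w ⟨y, rfl⟩
    rw [Subgroup.mem_bot]
    exact hall y
  have hfinal := hLCS N
  rw [hrange, Subgroup.map_bot] at hfinal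
  exact le_bot_iff.mp hfinal
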